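/- arXiv:1612.03206 — 2 statements merged into one kernel-verified Lean document; each statement's English description precedes it below -/
import Mathlib

section
/- Let (P_n)_{n∈ℕ} be a sequence of measurable subsets of [0,1], and suppose there exists η ∈ (0,1) such that for every nonempty open subinterval J ⊆ [0,1] there is some n with μ(P_n ∩ J) < η·μ(J), where μ is Lebesgue measure. Then the intersection P = ⋂_n P_n has Lebesgue measure zero, provided each P_n is a countable union of closed intervals (so that P_n ∩ U can be approximated from inside by finite unions of intervals for any open U). -/
open MeasureTheory Filter

/-- If each measurable `P n ⊆ [0,1]` is a countable union of closed
intervals, and there is `η ∈ (0,1)` such that every nonempty open subinterval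
`(a,b) ⊆ [0,1]` satisfies `μ(P n ∩ (a,b)) < η·μ((a,b))` for some `n`, then
`⋂ n, P n` is Lebesgue-null. -/
theorem stmt_1 (P : ℕ → Set ℝ) (hPm : ∀ n, MeasurableSet (P n))
    (hPsub : ∀ n, P n ⊆ Set.Icc (0:ℝ) 1)
    (hPclosed : ∀ n, ∃ a b : ℕ → ℝ, P n = ⋃ i, Set.Icc (a i) (b i))
    (η : ℝ) (hη : η ∈ Set.Ioo (0:ℝ) 1)
    (hyp : ∀ a b : ℝ, 0 ≤ a → a < b → b ≤ 1 →
      ∃ n, volume (P n ∩ Set.Ioo a b) < ENNReal.ofReal η * volume (Set.Ioo a b)) :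
    volume (⋂ n, P n) = 0 := by
  by_contra h
  set S : Set ℝ := ⋂ n, P n with hS
  have hSm : MeasurableSet S := MeasurableSet.iInter hPm
  have hSsub : S ⊆ Set.Icc (0:ℝ) 1 := (Set.iInter_subset P 0).trans (hPsub 0)
  have hne : volume.restrict S ≠ 0 := by
    intro h0
    apply h
    have := congrArg (fun μ : Measure ℝ => μ Set.univ) h0
    simpa [Measure.restrict_apply_univ] using this
  have hdens := Besicovitch.ae_tendsto_measure_inter_div volume S
  have h01 : ∀ᵐ x ∂volume.restrict S, x ∉ ({0, 1} : Set ℝ) := by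
    refine ae_iff.2 ?_
    have hle : volume.restrict S {x : ℝ | ¬ x ∉ ({0, 1} : Set ℝ)} ≤ volume ({0, 1} : Set ℝ) := by
      refine le_trans (Measure.restrict_le_self _) (measure_mono ?_)
      intro x hx
      exact not_not.mp hx
    have hz : volume ({0, 1} : Set ℝ) = 0 :=
      ((Set.finite_singleton (1:ℝ)).insert 0).measure_zero volume
    simpa using le_antisymm (le_trans hle hz.le) zero_le
  have hIoo : ∀ᵐ x ∂volume.restrict S, x ∈ Set.Ioo (0:ℝ) 1 := by
    filter_upwards [ae_restrict_mem hSm, h01] with x hxS hx01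
    simp only [Set.mem_insert_iff, Set.mem_singleton_iff, not_or] at hx01
    exact ⟨(hSsub hxS).1.lt_of_ne (Ne.symm hx01.1), (hSsub hxS).2.lt_of_ne hx01.2⟩
  have : NeBot (ae (volume.restrict S)) := ae_neBot.2 hne
  obtain ⟨x, hxT, hx01⟩ := (hdens.and hIoo).exists
  have hη1 : (ENNReal.ofReal η) < 1 := by
    rw [ENNReal.ofReal_lt_one]; exact hη.2
  have hev : ∀ᶠ r in nhdsWithin 0 (Set.Ioi (0:ℝ)),
      ENNReal.ofReal η < volume (S ∩ Metric.closedBall x r) / volume (Metric.closedBall x r) :=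
    hxT.eventually_const_lt hη1
  have hm : (0:ℝ) < min x (1 - x) := lt_min hx01.1 (by linarith [hx01.2])
  have hev2 : Set.Ioo (0:ℝ) (min x (1 - x)) ∈ nhdsWithin 0 (Set.Ioi (0:ℝ)) :=
    Ioo_mem_nhdsGT_of_mem (Set.mem_Ico.2 ⟨le_refl 0, hm⟩)
  obtain ⟨r, hr, hrm⟩ := (hev.and (eventually_of_mem hev2 (fun r hr => hr))).exists
  have hr0 : 0 < r := hrm.1
  have hrx : r < x := lt_of_lt_of_le hrm.2 (min_le_left _ _)
  have hrx' : r < 1 - x := lt_of_lt_of_le hrm.2 (min_le_right _ _)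
  set a := x - r
  set b := x + r
  have hab : a < b := by simp only [a, b]; linarith
  have ha0 : 0 ≤ a := by simp only [a]; linarith
  have hb1 : b ≤ 1 := by simp only [b]; linarith
  have hcb : Metric.closedBall x r = Set.Icc a b := Real.closedBall_eq_Icc
  have hvIcc : volume (Set.Icc a b) = ENNReal.ofReal (b - a) := Real.volume_Icc
  have hvIoo : volume (Set.Ioo a b) = ENNReal.ofReal (b - a) := Real.volume_Ioo
  have hvne : volume (Set.Icc a b) ≠ 0 := by
    rw [hvIcc]; simp only [ne_eq, ENNReal.ofReal_eq_zero, not_le]; linarith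
  have hvnt : volume (Set.Icc a b) ≠ ⊤ := by rw [hvIcc]; exact ENNReal.ofReal_ne_top
  rw [hcb] at hr
  have hmul : ENNReal.ofReal η * volume (Set.Icc a b) < volume (S ∩ Set.Icc a b) :=
    (ENNReal.lt_div_iff_mul_lt (Or.inl hvne) (Or.inl hvnt)).1 hr
  have hSIoo : volume (S ∩ Set.Icc a b) ≤ volume (S ∩ Set.Ioo a b) := by
    have hsub : S ∩ Set.Icc a b ⊆ (S ∩ Set.Ioo a b) ∪ ({a, b} : Set ℝ) := by
      intro y ⟨hyS, hyI⟩
      rcases eq_or_lt_of_le hyI.1 with h1 | h1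
      · exact Or.inr (Or.inl h1.symm)
      rcases eq_or_lt_of_le hyI.2 with h2 | h2
      · exact Or.inr (Or.inr h2)
      exact Or.inl ⟨hyS, h1, h2⟩
    calc volume (S ∩ Set.Icc a b) ≤ volume ((S ∩ Set.Ioo a b) ∪ ({a, b} : Set ℝ)) :=
          measure_mono hsub
      _ ≤ volume (S ∩ Set.Ioo a b) + volume ({a, b} : Set ℝ) := measure_union_le _ _
      _ = volume (S ∩ Set.Ioo a b) := by
          rw [((Set.finite_singleton b).insert a).measure_zero volume, add_zero]
  obtain ⟨n, hn⟩ := hyp a b ha0 hab hb1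
  have hSP : volume (S ∩ Set.Ioo a b) ≤ volume (P n ∩ Set.Ioo a b) :=
    measure_mono (Set.inter_subset_inter_left _ (Set.iInter_subset P n))
  have : ENNReal.ofReal η * volume (Set.Ioo a b) < ENNReal.ofReal η * volume (Set.Ioo a b) := by
    calc ENNReal.ofReal η * volume (Set.Ioo a b)
        = ENNReal.ofReal η * volume (Set.Icc a b) := by rw [hvIcc, hvIoo]
      _ < volume (S ∩ Set.Icc a b) := hmul
      _ ≤ volume (S ∩ Set.Ioo a b) := hSIoo
      _ ≤ volume (P n ∩ Set.Ioo a b) := hSP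
      _ < ENNReal.ofReal η * volume (Set.Ioo a b) := hn
  exact lt_irrefl _ this
end

section
/- Let f_t(x) = x + t + g(x) be a parameterized family of lifts, where g : ℝ → ℝ is continuous and 1-periodic. If the rotation number t ↦ ρ(f_t) takes an irrational value ρ₀ at t = t₀, then t₀ is the unique parameter with ρ(f_{t₀}) = ρ₀; equivalently, the level set {t : ρ(f_t) = ρ₀} is a single point for each irrational ρ₀. -/
open Filter

open scoped Classical in
private lemma stmt12_step (α s : ℝ) (hs : 0 < s) (q : ℕ) (p : ℤ) (hq : 0 < q)
    (h1 : (0:ℝ) < q * α - p) (h2 : (q:ℝ) * α - p < min s 1) :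
    ∃ (q' : ℕ) (p' : ℤ), 0 < q' ∧ (q':ℝ) * α < p' ∧ (p':ℝ) < q' * α + s := by
  set δ : ℝ := (q:ℝ) * α - p with hδ
  have hne : ∃ k : ℕ, 1 - min s 1 < (k:ℝ) * δ := by
    obtain ⟨k, hk⟩ := exists_nat_gt ((1 - min s 1) / δ)
    exact ⟨k, by rwa [div_lt_iff₀ h1] at hk⟩
  let k := Nat.find hne
  have hk : 1 - min s 1 < (k:ℝ) * δ := Nat.find_spec hne
  have hk1 : 1 ≤ k := by
    by_contra h
    interval_cases k
    · simp only [Nat.cast_zero, zero_mul] at hk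
      have : min s 1 ≤ 1 := min_le_right _ _
      linarith
  have hklt : (k:ℝ) * δ < 1 := by
    have hmin : ¬ (1 - min s 1 < ((k - 1 : ℕ):ℝ) * δ) := Nat.find_min hne (by omega)
    push_neg at hmin
    have hc : ((k - 1 : ℕ):ℝ) = (k:ℝ) - 1 := by
      have : (k - 1) + 1 = k := by omega
      have := congrArg (Nat.cast (R := ℝ)) this
      push_cast at this; linarith
    rw [hc] at hmin
    have : ((k:ℝ) - 1) * δ = k * δ - δ := by ring
    rw [this] at hmin
    have : min s 1 ≤ 1 := min_le_right _ _
    linarith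
  refine ⟨k * q, k * p + 1, by positivity, ?_, ?_⟩
  · have : ((k * q : ℕ):ℝ) * α = (k:ℝ) * p + (k:ℝ) * δ := by push_cast; rw [hδ]; ring
    rw [this]; push_cast; linarith
  · have : ((k * q : ℕ):ℝ) * α = (k:ℝ) * p + (k:ℝ) * δ := by push_cast; rw [hδ]; ring
    rw [this]; push_cast
    have : min s 1 ≤ s := min_le_left _ _
    linarith

private lemma stmt12_dense (α s : ℝ) (hα : Irrational α) (hs : 0 < s) :
    ∃ (q : ℕ) (p : ℤ), 0 < q ∧ (q:ℝ) * α < p ∧ (p:ℝ) < q * α + s := by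
  rcases (AddSubgroup.closure ({1, α} : Set ℝ)).dense_or_cyclic with hd | ⟨a, ha⟩
  · obtain ⟨x, hxG, hx⟩ := hd.exists_mem_open isOpen_Ioo
      (Set.nonempty_Ioo.2 (lt_min hs one_pos))
    obtain ⟨m, n, hmn⟩ := AddSubgroup.mem_closure_pair.1 hxG
    have hx0 : 0 < x := hx.1
    have hx1 : x < min s 1 := hx.2
    have hmn' : (m:ℝ) + n * α = x := by
      have : (m : ℤ) • (1:ℝ) + (n : ℤ) • α = x := hmn
      simpa [zsmul_eq_mul] using this
    have hn : n ≠ 0 := by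
      rintro rfl
      simp only [Int.cast_zero, zero_mul, add_zero] at hmn'
      subst hmn'
      have h1 : (0:ℝ) < m := hx0
      have h2 : (m:ℝ) < 1 := lt_of_lt_of_le hx1 (min_le_right _ _)
      have : (0:ℤ) < m := by exact_mod_cast h1
      have : (1:ℤ) ≤ m := this
      have : (1:ℝ) ≤ m := by exact_mod_cast this
      linarith
    rcases hn.lt_or_gt with hneg | hpos
    · -- n < 0 : take q = -n, p = m ; then p - q*α = m + n*α = x ∈ (0, min s 1)
      refine ⟨(-n).toNat, m, ?_, ?_, ?_⟩
      · omega
      · have hc : (((-n).toNat : ℕ) : ℝ) = -(n:ℝ) := by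
          have : ((-n).toNat : ℤ) = -n := Int.toNat_of_nonneg (by omega)
          exact_mod_cast this
        rw [hc]; linarith
      · have hc : (((-n).toNat : ℕ) : ℝ) = -(n:ℝ) := by
          have : ((-n).toNat : ℤ) = -n := Int.toNat_of_nonneg (by omega)
          exact_mod_cast this
        rw [hc]
        have : min s 1 ≤ s := min_le_left _ _
        linarith
    · -- n > 0 : q*α - p = n*α + m = x ∈ (0, min s 1); use the stepping lemma
      have hc : ((n.toNat : ℕ) : ℝ) = (n:ℝ) := by
        have : ((n.toNat : ℕ) : ℤ) = n := Int.toNat_of_nonneg (by omega)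
        exact_mod_cast this
      refine stmt12_step α s hs n.toNat (-m) (by omega) ?_ ?_
      · rw [hc]; push_cast; linarith
      · rw [hc]; push_cast; linarith
  · exfalso
    have h1 : (1:ℝ) ∈ AddSubgroup.closure ({1, α} : Set ℝ) :=
      AddSubgroup.subset_closure (Set.mem_insert _ _)
    have h2 : α ∈ AddSubgroup.closure ({1, α} : Set ℝ) :=
      AddSubgroup.subset_closure (Set.mem_insert_of_mem _ rfl)
    rw [ha, AddSubgroup.mem_closure_singleton] at h1 h2
    obtain ⟨n, hn⟩ := h1
    obtain ⟨m, hm⟩ := h2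
    have hn0 : n ≠ 0 := by rintro rfl; simp at hn
    have hnR : (n:ℝ) ≠ 0 := Int.cast_ne_zero.2 hn0
    have ha' : a = 1 / n := by
      rw [zsmul_eq_mul] at hn
      field_simp
      linarith [hn]
    have : α = (m:ℝ) / n := by
      rw [zsmul_eq_mul, ha'] at hm
      rw [← hm]; ring
    exact hα ⟨(m:ℚ)/(n:ℚ), by push_cast; rw [this]⟩

/-- for the rigid family `f_t(x) = x + t + g(x)` with `g`
continuous and 1-periodic, each irrational rotation number value is attained
at exactly one parameter. -/
theorem stmt_12 (g : ℝ → ℝ) (hg : Continuous g) (hper : ∀ x, g (x + 1) = g x)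
    (hhomeo : ∀ t : ℝ, StrictMono fun x => x + t + g x)
    (ρ : ℝ → ℝ)
    (hρ : ∀ t : ℝ,
      Tendsto (fun n : ℕ => (fun x => x + t + g x)^[n] 0 / n) atTop (nhds (ρ t)))
    (t₀ : ℝ) (hirr : Irrational (ρ t₀)) :
    ∀ t : ℝ, ρ t = ρ t₀ → t = t₀ := by
  set F : ℝ → CircleDeg1Lift := fun t =>
    ⟨⟨fun x => x + t + g x, (hhomeo t).monotone⟩, fun x => by
      simp only [hper x]; ring⟩ with hF
  have hFapp : ∀ t x, F t x = x + t + g x := fun t x => rfl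
  have hFcont : ∀ t, Continuous (F t) := fun t => by
    exact ((continuous_id.add continuous_const).add hg : Continuous fun x => x + t + g x)
  have hτ : ∀ t, CircleDeg1Lift.translationNumber (F t) = ρ t := fun t =>
    (F t).translationNumber_eq_of_tendsto₀ (hρ t)
  -- key step: two distinct parameters cannot share an irrational rotation number
  have key : ∀ a b : ℝ, a < b → Irrational (ρ a) → ρ a = ρ b → False := by
    intro a b hab hirra hρab
    set α := ρ a with hα
    set s := b - a with hs
    have hs0 : 0 < s := by simp [hs]; linarith
    obtain ⟨q, p, hq, hp1, hp2⟩ := stmt12_dense α s hirra hs0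
    -- there is a point realizing the translation number of (F a)^q
    have hcontq : Continuous ((F a) ^ q : CircleDeg1Lift) := by
      rw [CircleDeg1Lift.coe_pow]
      exact (hFcont a).iterate q
    obtain ⟨x, hx⟩ := ((F a) ^ q).exists_eq_add_translationNumber hcontq
    rw [CircleDeg1Lift.translationNumber_pow, hτ a, ← hα] at hx
    -- the iterate comparison : (F a)^[n] x + s ≤ (F b)^[n] x for n ≥ 1
    have hcmp : ∀ n : ℕ, 0 < n → ∀ y : ℝ, (⇑(F a))^[n] y + s ≤ (⇑(F b))^[n] y := by
      intro n
      induction n with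
      | zero => omega
      | succ m ih =>
        intro _ y
        rcases Nat.eq_zero_or_pos m with hm | hm
        · subst hm
          show F a y + s ≤ F b y
          rw [hFapp, hFapp, hs]
          linarith
        · have h1 := ih hm y
          rw [Function.iterate_succ_apply', Function.iterate_succ_apply']
          have h2 : (F a) ((⇑(F a))^[m] y) ≤ (F a) ((⇑(F b))^[m] y) :=
            (F a).mono (by linarith)
          have h3 : (F b) ((⇑(F b))^[m] y) = (F a) ((⇑(F b))^[m] y) + s := by
            rw [hFapp, hFapp, hs]; ring
          linarith
    -- upper bound from the translation number of (F b)^q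
    have hτb : CircleDeg1Lift.translationNumber ((F b) ^ q) = q * α := by
      rw [CircleDeg1Lift.translationNumber_pow, hτ b, ← hρab]
    have hub : ((F b) ^ q) x < x + p :=
      CircleDeg1Lift.map_lt_of_translationNumber_lt_int _ (by rw [hτb]; exact hp1) x
    have hlb : x + ↑q * α + s ≤ ((F b) ^ q) x := by
      have := hcmp q hq x
      rw [← CircleDeg1Lift.coe_pow, ← CircleDeg1Lift.coe_pow] at this
      rw [hx] at this
      linarith [this]
    linarith
  intro t ht
  by_contra hne
  rcases lt_or_gt_of_ne hne with h | h
  · exact key t t₀ h (by rw [ht]; exact hirr) ht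
  · exact key t₀ t h hirr ht.symm
end
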